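/- Let n ≥ 3, κ ≥ log 2, j ≥ 1, δ ≥ 1, and T ≥ j. If n is odd, then ⌈n/2⌉·exp(−κj) + (n − ⌈n/2⌉)·exp(−κT) ≥ exp(−κj) + (n−1)·exp(−κ(j+1)). -/
import Mathlib


/-- Core inequality (odd case) of `R_SPST ≥ R_FCFS`: for odd `n ≥ 3`,
`κ ≥ log 2`, `j ≥ 1`, `δ ≥ 1`, `T ≥ j`, the SPST lower bound
`⌈n/2⌉·e^{-κj} + (n - ⌈n/2⌉)·e^{-κT}` dominates the FCFS upper bound
`e^{-κj} + (n-1)·e^{-κ(j+1)}`. -/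
theorem core_inequality_odd
    (n : ℕ) (κ j δ T : ℝ)
    (hn : 3 ≤ n) (hodd : Odd n)
    (hκ : Real.log 2 ≤ κ) (hj : 1 ≤ j) (hδ : 1 ≤ δ) (hT : j ≤ T) :
    Real.exp (-κ * j) + ((n : ℝ) - 1) * Real.exp (-κ * (j + 1)) ≤
      (((n + 1) / 2 : ℕ) : ℝ) * Real.exp (-κ * j) +
        ((n : ℝ) - (((n + 1) / 2 : ℕ) : ℝ)) * Real.exp (-κ * T) := by
  obtain ⟨m, rfl⟩ := hodd
  have hhalf : (2 * m + 1 + 1) / 2 = m + 1 := by omega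
  rw [hhalf]
  have hm : 1 ≤ m := by omega
  have hm' : (1 : ℝ) ≤ (m : ℝ) := by exact_mod_cast hm
  have h2 : (2 : ℝ) ≤ Real.exp κ := by
    calc (2 : ℝ) = Real.exp (Real.log 2) := (Real.exp_log (by norm_num)).symm
    _ ≤ Real.exp κ := Real.exp_le_exp.mpr hκ
  have hexp : Real.exp (-κ) ≤ 1 / 2 := by
    rw [Real.exp_neg, inv_le_comm₀ (Real.exp_pos κ) (by norm_num)]
    simpa using h2
  have hsplit : Real.exp (-κ * (j + 1)) = Real.exp (-κ * j) * Real.exp (-κ) := by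
    rw [← Real.exp_add]; ring_nf
  have hepos := Real.exp_pos (-κ * j)
  have hTpos := (Real.exp_pos (-κ * T)).le
  rw [hsplit]
  push_cast
  have hkey : (2 * (m : ℝ) * Real.exp (-κ * j)) * Real.exp (-κ) ≤
      (2 * (m : ℝ) * Real.exp (-κ * j)) * (1 / 2) :=
    mul_le_mul_of_nonneg_left hexp (by positivity)
  nlinarith [mul_nonneg (by positivity : (0:ℝ) ≤ (m : ℝ)) hTpos]
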